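/- For integers k, l ≥ 2 and a real parameter t, with ζ^t(a,b) = ζ(a,b) + t·ζ(a+b), the finite double shuffle relation holds: (1 + (C(k+l, k) − 2)·t) · ζ(k+l) = ∑_{i=1}^{k-1} C(k+l-i-1, l-1) · ζ^t(k+l-i, i) + ∑_{i=1}^{l-1} C(k+l-i-1, k-1) · ζ^t(k+l-i, i). -/

import Mathlib

set_option maxHeartbeats 1000000
open Finset

/-- The Riemann zeta value `ζ(s) = ∑_{m ≥ 1} 1/m^s`. -/
noncomputable def zetaVal (s : ℕ) : ℝ :=
  ∑' m : ℕ, if 1 ≤ m then 1 / (m : ℝ) ^ s else 0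

/-- The double zeta value `ζ(a,b) = ∑_{m > n ≥ 1} 1/(m^a n^b)`. -/
noncomputable def doubleZeta (a b : ℕ) : ℝ :=
  ∑' p : ℕ × ℕ, if 1 ≤ p.2 ∧ p.2 < p.1 then 1 / ((p.1 : ℝ) ^ a * (p.2 : ℝ) ^ b) else 0

/-- The interpolated double zeta value `ζ^t(a,b) = ζ(a,b) + t·ζ(a+b)`. -/
noncomputable def tDoubleZeta (t : ℝ) (a b : ℕ) : ℝ :=
  doubleZeta a b + t * zetaVal (a + b)


/-- auxiliary partial-fraction sum -/
noncomputable def Ufun (a b : ℕ) (x y : ℝ) : ℝ :=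
  ∑ i ∈ range (a+1), (Nat.choose (b+i) b : ℝ) / ((x+y)^(b+1+i) * x^(a+1-i))

lemma keyU (a b : ℕ) (x y : ℝ) :
    (x+y)⁻¹ * (Ufun a (b+1) x y + Ufun (a+1) b x y) = Ufun (a+1) (b+1) x y := by
  have h1 : (x+y)⁻¹ * Ufun a (b+1) x y
      = ∑ i ∈ range (a+2), (Nat.choose (b+i) (b+1) : ℝ) / ((x+y)^(b+2+i) * x^(a+2-i)) := by
    rw [Finset.sum_range_succ' (fun i => (Nat.choose (b+i) (b+1):ℝ) / ((x+y)^(b+2+i) * x^(a+2-i))) (a+1)]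
    have h0 : (Nat.choose (b+0) (b+1) : ℝ) = 0 := by
      norm_cast
      exact Nat.choose_eq_zero_of_lt (by omega)
    rw [h0]
    simp only [zero_div, add_zero]
    rw [Ufun, Finset.mul_sum]
    apply Finset.sum_congr rfl
    intro i hi
    have e1 : b+2+(i+1) = (b+1+1+i)+1 := by omega
    have e2 : a+2-(i+1) = a+1-i := by omega
    have e3 : b+(i+1) = b+1+i := by omega
    rw [e1, e2, e3, pow_succ]
    rw [div_eq_mul_inv, div_eq_mul_inv, mul_inv, mul_inv, mul_inv]
    ring
  have h2 : (x+y)⁻¹ * Ufun (a+1) b x y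
      = ∑ i ∈ range (a+2), (Nat.choose (b+i) b : ℝ) / ((x+y)^(b+2+i) * x^(a+2-i)) := by
    rw [Ufun, Finset.mul_sum]
    apply Finset.sum_congr rfl
    intro i hi
    have e1 : b+2+i = (b+1+i)+1 := by omega
    rw [e1, pow_succ]
    rw [div_eq_mul_inv, div_eq_mul_inv, mul_inv, mul_inv, mul_inv]
    ring
  rw [mul_add, h1, h2, ← Finset.sum_add_distrib, Ufun]
  apply Finset.sum_congr rfl
  intro i hi
  have e1 : b+1+i = (b+i)+1 := by omega
  have e2 : (Nat.choose (b+1+i) (b+1) : ℝ) = (Nat.choose (b+i) (b+1) : ℝ) + (Nat.choose (b+i) b : ℝ) := by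
    rw [e1]
    norm_cast
    rw [Nat.choose_succ_succ]
    simp only [Nat.succ_eq_add_one]
    omega
  rw [e2, add_div]

lemma U_zero_right : ∀ (a : ℕ) (x y : ℝ), 0 < x → 0 < y →
    1/(x^(a+1) * y^(0+1)) = Ufun a 0 x y + Ufun 0 a y x := by
  intro a
  induction a with
  | zero =>
    intro x y hx hy
    have hxy : x + y ≠ 0 := by positivity
    simp only [Ufun, Finset.sum_range_one, Nat.add_zero, Nat.zero_add, Nat.choose_self,
      Nat.cast_one, Nat.sub_zero, pow_one]
    rw [add_comm y x]
    field_simp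
    ring
  | succ a ih =>
    intro x y hx hy
    have hxy : x + y ≠ 0 := by positivity
    have hx' : x ≠ 0 := hx.ne'
    have hy' : y ≠ 0 := hy.ne'
    have key : 1/(x^(a+1+1) * y^(0+1)) = (x+y)⁻¹ * (1/(x^(a+1)*y^(0+1)) + 1/x^(a+2)) := by
      rw [eq_inv_mul_iff_mul_eq₀ hxy]
      field_simp
      ring
    rw [key, ih x y hx hy]
    -- now show (x+y)⁻¹ * (Ufun a 0 x y + Ufun 0 a y x + 1/x^(a+2)) = Ufun (a+1) 0 x y + Ufun 0 (a+1) y x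
    have hU2 : (x+y)⁻¹ * Ufun 0 a y x = Ufun 0 (a+1) y x := by
      simp only [Ufun, Finset.sum_range_one, Nat.add_zero, Nat.choose_self, Nat.cast_one,
        Nat.sub_zero, Nat.zero_add, pow_one]
      rw [show y + x = x + y from add_comm y x]
      rw [show a+1+1 = (a+1)+1 from rfl]
      rw [pow_succ (x+y) (a+1)]
      rw [div_eq_mul_inv, div_eq_mul_inv, mul_inv, mul_inv, mul_inv]
      ring
    have hU1 : (x+y)⁻¹ * (Ufun a 0 x y + 1/x^(a+2)) = Ufun (a+1) 0 x y := by
      have expand : Ufun (a+1) 0 x y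
          = ∑ i ∈ range (a+1), (Nat.choose (0+(i+1)) 0 : ℝ) / ((x+y)^(0+1+(i+1)) * x^(a+2-(i+1)))
            + (Nat.choose (0+0) 0 : ℝ) / ((x+y)^(0+1+0) * x^(a+2-0)) := by
        rw [Ufun]
        exact Finset.sum_range_succ' _ (a+1)
      rw [expand, mul_add, Ufun, Finset.mul_sum]
      congr 1
      · apply Finset.sum_congr rfl
        intro i hi
        have e1 : (0:ℕ)+1+(i+1) = (0+1+i)+1 := by omega
        have e2 : a+2-(i+1) = a+1-i := by omega
        simp only [Nat.zero_add, Nat.choose_zero_right] at *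
        rw [e1, e2, pow_succ]
        rw [div_eq_mul_inv, div_eq_mul_inv, mul_inv, mul_inv, mul_inv]
        ring
      · simp only [Nat.add_zero, Nat.zero_add, Nat.choose_self, Nat.cast_one, Nat.sub_zero,
          pow_one, one_div, mul_inv]
        try ring
    rw [← hU1, ← hU2]
    ring

lemma PF : ∀ (n a b : ℕ), a + b = n → ∀ (x y : ℝ), 0 < x → 0 < y →
    1/(x^(a+1) * y^(b+1)) = Ufun a b x y + Ufun b a y x := by
  intro n
  induction n using Nat.strong_induction_on with
  | _ n ih =>
    intro a b hab x y hx hy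
    match a, b with
    | a, 0 => exact U_zero_right a x y hx hy
    | 0, b+1 =>
      have := U_zero_right (b+1) y x hy hx
      rw [show 1/(x^(0+1) * y^(b+1+1)) = 1/(y^(b+1+1) * x^(0+1)) by ring, this]
      ring
    | a+1, b+1 =>
      have hxy : x + y ≠ 0 := by positivity
      have hx' : x ≠ 0 := hx.ne'
      have hy' : y ≠ 0 := hy.ne'
      have key : 1/(x^(a+1+1) * y^(b+1+1))
          = (x+y)⁻¹ * (1/(x^(a+1)*y^(b+1+1)) + 1/(x^(a+1+1)*y^(b+1))) := by
        rw [eq_inv_mul_iff_mul_eq₀ hxy]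
        field_simp
        ring
      rw [key, ih (a + (b+1)) (by omega) a (b+1) rfl x y hx hy,
        ih ((a+1) + b) (by omega) (a+1) b rfl x y hx hy]
      have k1 := keyU a b x y
      have k2 := keyU b a y x
      rw [show y + x = x + y from by ring] at k2
      calc (x+y)⁻¹ * (Ufun a (b+1) x y + Ufun (b+1) a y x + (Ufun (a+1) b x y + Ufun b (a+1) y x))
          = (x+y)⁻¹ * (Ufun a (b+1) x y + Ufun (a+1) b x y)
            + (x+y)⁻¹ * (Ufun b (a+1) y x + Ufun (b+1) a y x) := by ring
        _ = Ufun (a+1) (b+1) x y + Ufun (b+1) (a+1) y x := by rw [k1, k2]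

noncomputable def zS (s : ℕ) : ℕ → ℝ := fun m => if 1 ≤ m then 1/(m:ℝ)^s else 0

noncomputable def dS (a b : ℕ) : ℕ × ℕ → ℝ :=
  fun p => if 1 ≤ p.2 ∧ p.2 < p.1 then 1/((p.1:ℝ)^a * (p.2:ℝ)^b) else 0

lemma zetaVal_eq (s : ℕ) : zetaVal s = ∑' m, zS s m := rfl

lemma doubleZeta_eq (a b : ℕ) : doubleZeta a b = ∑' p, dS a b p := rfl

lemma zS_eq {s : ℕ} (hs : 1 ≤ s) : zS s = fun m : ℕ => 1/(m:ℝ)^s := by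
  funext m
  unfold zS
  split_ifs with h
  · rfl
  · have hm : m = 0 := by omega
    subst hm
    rw [Nat.cast_zero, zero_pow (show s ≠ 0 by omega), div_zero]

lemma zS_nonneg (s : ℕ) (m : ℕ) : 0 ≤ zS s m := by
  unfold zS; split_ifs <;> positivity

lemma dS_nonneg (a b : ℕ) (p : ℕ × ℕ) : 0 ≤ dS a b p := by
  unfold dS; split_ifs <;> positivity

lemma zS_summable {s : ℕ} (hs : 2 ≤ s) : Summable (zS s) := by
  rw [zS_eq (by omega)]
  exact Real.summable_one_div_nat_pow.2 (by omega)

lemma dS_summable {a b : ℕ} (ha : 2 ≤ a) (hb : 1 ≤ b) : Summable (dS a b) := by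
  have hr : Summable (fun m : ℕ => 1/(m:ℝ)^(3/2 : ℝ)) :=
    Real.summable_one_div_nat_rpow.2 (by norm_num)
  have hprod : Summable (fun p : ℕ × ℕ => (1/(p.1:ℝ)^(3/2:ℝ)) * (1/(p.2:ℝ)^(3/2:ℝ))) :=
    hr.mul_of_nonneg hr (fun m => by positivity) (fun m => by positivity)
  apply Summable.of_nonneg_of_le (dS_nonneg a b) _ hprod
  rintro ⟨m, n⟩
  unfold dS
  split_ifs with h
  · obtain ⟨hn, hnm⟩ := h
    have hm : 1 ≤ m := by omega
    have hm1 : (1:ℝ) ≤ (m:ℝ) := by exact_mod_cast hm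
    have hn1 : (1:ℝ) ≤ (n:ℝ) := by exact_mod_cast hn
    have hnm1 : (n:ℝ) ≤ (m:ℝ) := by exact_mod_cast hnm.le
    have hm0 : (0:ℝ) < (m:ℝ) := by linarith
    have hn0 : (0:ℝ) < (n:ℝ) := by linarith
    rw [div_mul_div_comm, one_mul]
    apply one_div_le_one_div_of_le (by positivity)
    -- show (m:ℝ)^(3/2) * (n:ℝ)^(3/2) ≤ m^a * n^b
    have key1 : (n:ℝ)^(3/2:ℝ) ≤ (n:ℝ)^(b:ℝ) * (m:ℝ)^(1/2:ℝ) := by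
      have e : (n:ℝ)^(3/2:ℝ) = (n:ℝ)^(b:ℝ) * (n:ℝ)^((3/2:ℝ) - b) := by
        rw [← Real.rpow_add hn0]; ring_nf
      rw [e]
      apply mul_le_mul_of_nonneg_left _ (by positivity)
      calc (n:ℝ)^((3/2:ℝ) - b) ≤ (n:ℝ)^(1/2:ℝ) := by
            apply Real.rpow_le_rpow_of_exponent_le hn1
            have : (1:ℝ) ≤ (b:ℝ) := by exact_mod_cast hb
            linarith
        _ ≤ (m:ℝ)^(1/2:ℝ) := Real.rpow_le_rpow hn0.le hnm1 (by norm_num)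
    have key2 : (m:ℝ)^(3/2:ℝ) * (m:ℝ)^(1/2:ℝ) = (m:ℝ)^2 := by
      rw [← Real.rpow_add hm0]
      norm_num
    calc (m:ℝ)^(3/2:ℝ) * (n:ℝ)^(3/2:ℝ)
        ≤ (m:ℝ)^(3/2:ℝ) * ((n:ℝ)^(b:ℝ) * (m:ℝ)^(1/2:ℝ)) := by
          apply mul_le_mul_of_nonneg_left key1 (by positivity)
      _ = (m:ℝ)^2 * (n:ℝ)^(b:ℝ) := by rw [← key2]; ring
      _ = (m:ℝ)^2 * (n:ℝ)^b := by rw [Real.rpow_natCast]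
      _ ≤ (m:ℝ)^a * (n:ℝ)^b := by
          apply mul_le_mul_of_nonneg_right _ (by positivity)
          exact pow_le_pow_right₀ hm1 ha
  · positivity

/-- the reindexing injection `(m,n) ↦ (m+n, m)` -/
lemma g1_inj : Function.Injective (fun p : ℕ × ℕ => (p.1 + p.2, p.1)) := by
  rintro ⟨a, b⟩ ⟨c, d⟩ h
  simp only [Prod.mk.injEq] at h
  obtain ⟨h1, h2⟩ := h
  simp only [Prod.mk.injEq]
  omega

lemma g2_inj : Function.Injective (fun p : ℕ × ℕ => (p.1 + p.2, p.2)) := by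
  rintro ⟨a, b⟩ ⟨c, d⟩ h
  simp only [Prod.mk.injEq] at h
  obtain ⟨h1, h2⟩ := h
  simp only [Prod.mk.injEq]
  omega

lemma g1_supp (a b : ℕ) :
    Function.support (dS a b) ⊆ Set.range (fun p : ℕ × ℕ => (p.1 + p.2, p.1)) := by
  rintro ⟨m, n⟩ h
  simp only [Function.mem_support, dS] at h
  have hc : 1 ≤ n ∧ n < m := by
    by_contra hc
    rw [if_neg hc] at h
    exact h rfl
  refine ⟨(n, m - n), ?_⟩
  show (n + (m - n), n) = (m, n)
  rw [Prod.mk.injEq]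
  exact ⟨by omega, rfl⟩

lemma g2_supp (a b : ℕ) :
    Function.support (dS a b) ⊆ Set.range (fun p : ℕ × ℕ => (p.1 + p.2, p.2)) := by
  rintro ⟨m, n⟩ h
  simp only [Function.mem_support, dS] at h
  have hc : 1 ≤ n ∧ n < m := by
    by_contra hc
    rw [if_neg hc] at h
    exact h rfl
  refine ⟨(m - n, n), ?_⟩
  show (m - n + n, n) = (m, n)
  rw [Prod.mk.injEq]
  exact ⟨by omega, rfl⟩

lemma tsum_g1 (a b : ℕ) : ∑' p : ℕ × ℕ, dS a b (p.1 + p.2, p.1) = doubleZeta a b :=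
  g1_inj.tsum_eq (g1_supp a b)

lemma tsum_g2 (a b : ℕ) : ∑' p : ℕ × ℕ, dS a b (p.1 + p.2, p.2) = doubleZeta a b :=
  g2_inj.tsum_eq (g2_supp a b)

lemma summable_g1 {a b : ℕ} (ha : 2 ≤ a) (hb : 1 ≤ b) :
    Summable (fun p : ℕ × ℕ => dS a b (p.1 + p.2, p.1)) :=
  (g1_inj.summable_iff (fun x hx => Function.notMem_support.mp
    (fun hs => hx (g1_supp a b hs)))).2 (dS_summable ha hb)

lemma summable_g2 {a b : ℕ} (ha : 2 ≤ a) (hb : 1 ≤ b) :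
    Summable (fun p : ℕ × ℕ => dS a b (p.1 + p.2, p.2)) :=
  (g2_inj.summable_iff (fun x hx => Function.notMem_support.mp
    (fun hs => hx (g2_supp a b hs)))).2 (dS_summable ha hb)

/-- Converting `Ufun` into a sum of `dS` values. -/
lemma Ufun_eq_sum (a b m n : ℕ) (hm : 1 ≤ m) (hn : 1 ≤ n) :
    Ufun a b (m:ℝ) (n:ℝ)
      = ∑ r ∈ Finset.Icc 1 (a+1), (Nat.choose (a+b+1-r) b : ℝ) * dS (a+b+2-r) r (m+n, m) := by
  rw [show ∑ r ∈ Finset.Icc 1 (a+1), (Nat.choose (a+b+1-r) b : ℝ) * dS (a+b+2-r) r (m+n, m)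
      = ∑ i ∈ range (a+1), (Nat.choose (a+b+1-(1+i)) b : ℝ) * dS (a+b+2-(1+i)) (1+i) (m+n, m)
      from Finset.sum_nbij' (fun r => r - 1) (fun i => 1 + i)
        (by intro x hx; simp only [Finset.mem_Icc] at hx; simp only [Finset.mem_range]; omega)
        (by intro x hx; simp only [Finset.mem_range] at hx; simp only [Finset.mem_Icc]; omega)
        (by intro x hx; simp only [Finset.mem_Icc] at hx; show 1 + (x - 1) = x; omega)
        (by intro x hx; simp only [Finset.mem_range] at hx; show 1 + x - 1 = x; omega)
        (by intro x hx; simp only [Finset.mem_Icc] at hx; rw [show 1 + (x-1) = x by omega])]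
  rw [← Finset.sum_range_reflect]
  rw [Ufun]
  apply Finset.sum_congr rfl
  intro i hi
  simp only [Finset.mem_range] at hi
  have hi' : i ≤ a := by omega
  have e1 : a + b + 1 - (1 + (a + 1 - 1 - i)) = b + i := by omega
  have e2 : a + b + 2 - (1 + (a + 1 - 1 - i)) = b + 1 + i := by omega
  have e3 : 1 + (a + 1 - 1 - i) = a + 1 - i := by omega
  rw [e1, e2, e3]
  have hcond : 1 ≤ m ∧ m < m + n := by omega
  rw [dS, if_pos]
  swap
  · exact hcond
  have : ((m + n : ℕ) : ℝ) = (m:ℝ) + (n:ℝ) := by push_cast; ring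
  rw [this, mul_one_div]

lemma Fprod_summable {k l : ℕ} (hk : 2 ≤ k) (hl : 2 ≤ l) :
    Summable (fun p : ℕ × ℕ => zS k p.1 * zS l p.2) :=
  (zS_summable hk).mul_of_nonneg (zS_summable hl) (zS_nonneg k) (zS_nonneg l)

lemma Fprod_tsum {k l : ℕ} (hk : 2 ≤ k) (hl : 2 ≤ l) :
    ∑' p : ℕ × ℕ, zS k p.1 * zS l p.2 = zetaVal k * zetaVal l := by
  have h1 : Summable (fun m : ℕ => ‖zS k m‖) := by
    simpa [Real.norm_of_nonneg (zS_nonneg k _)] using zS_summable hk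
  have h2 : Summable (fun m : ℕ => ‖zS l m‖) := by
    simpa [Real.norm_of_nonneg (zS_nonneg l _)] using zS_summable hl
  rw [zetaVal_eq, zetaVal_eq]
  exact (tsum_mul_tsum_of_summable_norm h1 h2).symm

/-- Euler's decomposition (shuffle relation). -/
lemma euler {k l : ℕ} (hk : 2 ≤ k) (hl : 2 ≤ l) :
    zetaVal k * zetaVal l
      = ∑ i ∈ Finset.Icc 1 k, (Nat.choose (k+l-i-1) (l-1) : ℝ) * doubleZeta (k+l-i) i
        + ∑ i ∈ Finset.Icc 1 l, (Nat.choose (k+l-i-1) (k-1) : ℝ) * doubleZeta (k+l-i) i := by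
  have hpt : ∀ p : ℕ × ℕ, zS k p.1 * zS l p.2
      = (∑ i ∈ Finset.Icc 1 k, (Nat.choose (k+l-i-1) (l-1) : ℝ) * dS (k+l-i) i (p.1+p.2, p.1))
        + (∑ i ∈ Finset.Icc 1 l, (Nat.choose (k+l-i-1) (k-1) : ℝ) * dS (k+l-i) i (p.1+p.2, p.2)) := by
    rintro ⟨m, n⟩
    rcases Nat.eq_zero_or_pos m with hm | hm
    · subst hm
      rw [show zS k 0 = 0 by simp [zS], zero_mul]
      rw [Finset.sum_eq_zero, Finset.sum_eq_zero, add_zero]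
      · intro i hi; simp [dS]
      · intro i hi; simp [dS]
    rcases Nat.eq_zero_or_pos n with hn | hn
    · subst hn
      rw [show zS l 0 = 0 by simp [zS], mul_zero]
      rw [Finset.sum_eq_zero, Finset.sum_eq_zero, add_zero]
      · intro i hi; simp [dS]
      · intro i hi; simp [dS]
    have hm1 : (0:ℝ) < (m:ℝ) := by exact_mod_cast hm
    have hn1 : (0:ℝ) < (n:ℝ) := by exact_mod_cast hn
    have hm' : 1 ≤ m := hm
    have hn' : 1 ≤ n := hn
    have lhs_eq : zS k m * zS l n = 1/((m:ℝ)^k * (n:ℝ)^l) := by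
      simp only [zS]
      rw [if_pos hm', if_pos hn', div_mul_div_comm, one_mul]
    rw [lhs_eq]
    have hk1 : k = (k-1)+1 := by omega
    have hl1 : l = (l-1)+1 := by omega
    have pf := PF ((k-1)+(l-1)) (k-1) (l-1) rfl (m:ℝ) (n:ℝ) hm1 hn1
    rw [← hk1, ← hl1] at pf
    rw [pf, Ufun_eq_sum (k-1) (l-1) m n hm hn, Ufun_eq_sum (l-1) (k-1) n m hn hm]
    congr 1
    · apply Finset.sum_congr (by rw [← hk1])
      intro i hi
      simp only [Finset.mem_Icc, ← hk1] at hi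
      rw [show k-1+(l-1)+1-i = k+l-i-1 by omega, show k-1+(l-1)+2-i = k+l-i by omega]
    · rw [show (n:ℕ) + m = m + n by omega]
      apply Finset.sum_congr (by rw [← hl1])
      intro i hi
      simp only [Finset.mem_Icc, ← hl1] at hi
      rw [show l-1+(k-1)+1-i = k+l-i-1 by omega, show l-1+(k-1)+2-i = k+l-i by omega]
  have hsum1 : ∀ i ∈ Finset.Icc 1 k, Summable
      (fun p : ℕ × ℕ => (Nat.choose (k+l-i-1) (l-1) : ℝ) * dS (k+l-i) i (p.1+p.2, p.1)) := by
    intro i hi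
    simp only [Finset.mem_Icc] at hi
    exact (summable_g1 (by omega) (by omega)).mul_left _
  have hsum2 : ∀ i ∈ Finset.Icc 1 l, Summable
      (fun p : ℕ × ℕ => (Nat.choose (k+l-i-1) (k-1) : ℝ) * dS (k+l-i) i (p.1+p.2, p.2)) := by
    intro i hi
    simp only [Finset.mem_Icc] at hi
    exact (summable_g2 (by omega) (by omega)).mul_left _
  rw [← Fprod_tsum hk hl]
  rw [tsum_congr hpt]
  rw [Summable.tsum_add (summable_sum hsum1) (summable_sum hsum2)]
  rw [Summable.tsum_finsetSum hsum1, Summable.tsum_finsetSum hsum2]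
  congr 1
  · apply Finset.sum_congr rfl
    intro i hi
    rw [tsum_mul_left, tsum_g1]
  · apply Finset.sum_congr rfl
    intro i hi
    rw [tsum_mul_left, tsum_g2]

/-- The harmonic (stuffle) relation. -/
lemma stuffle {k l : ℕ} (hk : 2 ≤ k) (hl : 2 ≤ l) :
    zetaVal k * zetaVal l = doubleZeta k l + doubleZeta l k + zetaVal (k+l) := by
  set A : ℕ × ℕ → ℝ := dS k l with hA
  set B : ℕ × ℕ → ℝ := fun p => dS l k (p.2, p.1) with hB
  set C : ℕ × ℕ → ℝ := fun p => if p.1 = p.2 then zS (k+l) p.1 else 0 with hC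
  have hpt : ∀ p : ℕ × ℕ, zS k p.1 * zS l p.2 = A p + B p + C p := by
    rintro ⟨m, n⟩
    simp only [hA, hB, hC, dS, zS]
    split_ifs <;>
      first
        | (exfalso; omega)
        | ring1
        | (rename_i hmn; subst hmn; rw [div_mul_div_comm, one_mul, ← pow_add]; ring1)
        | rfl
  have hAs : Summable A := dS_summable hk (by omega)
  have hBs : Summable B := by
    rw [hB]
    exact ((Equiv.prodComm ℕ ℕ).summable_iff).2 (dS_summable hl (by omega))
  have hCnn : ∀ p : ℕ × ℕ, 0 ≤ C p := by
    intro p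
    rw [hC]
    dsimp only
    split_ifs
    · exact zS_nonneg _ _
    · exact le_rfl
  have hCle : ∀ p : ℕ × ℕ, C p ≤ zS k p.1 * zS l p.2 := by
    rintro ⟨m, n⟩
    rw [hC]
    dsimp only
    split_ifs with h
    · subst h
      simp only [zS]
      split_ifs with h2
      · exact le_of_eq (by rw [div_mul_div_comm, one_mul, ← pow_add])
      · norm_num
    · exact mul_nonneg (zS_nonneg _ _) (zS_nonneg _ _)
  have hCs : Summable C := Summable.of_nonneg_of_le hCnn hCle (Fprod_summable hk hl)
  have hBt : ∑' p, B p = doubleZeta l k := by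
    rw [doubleZeta_eq, hB]
    exact (Equiv.prodComm ℕ ℕ).tsum_eq (dS l k)
  have hinj : Function.Injective (fun m : ℕ => ((m, m) : ℕ × ℕ)) := by
    intro x y h
    simpa using congrArg Prod.fst h
  have hsupp : Function.support C ⊆ Set.range (fun m : ℕ => ((m, m) : ℕ × ℕ)) := by
    rintro ⟨m, n⟩ h
    simp only [Function.mem_support, hC] at h
    have hmn : m = n := by
      by_contra hmn
      rw [if_neg hmn] at h
      exact h rfl
    exact ⟨m, by simp [hmn]⟩
  have hCt : ∑' p, C p = zetaVal (k+l) := by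
    calc ∑' p, C p = ∑' m : ℕ, C (m, m) := (hinj.tsum_eq hsupp).symm
      _ = ∑' m, zS (k+l) m := by
          apply tsum_congr
          intro m
          simp [hC]
      _ = zetaVal (k+l) := (zetaVal_eq _).symm
  rw [← Fprod_tsum hk hl, tsum_congr hpt, Summable.tsum_add (hAs.add hBs) hCs, Summable.tsum_add hAs hBs,
    hBt, hCt]
  rfl

/-- hockey stick in form needed -/
lemma hockey (k l : ℕ) (hk : 1 ≤ k) (hl : 1 ≤ l) :
    ∑ i ∈ Finset.Icc 1 k, Nat.choose (k+l-i-1) (l-1) = Nat.choose (k+l-1) l := by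
  have := Nat.sum_Icc_choose (k+l-2) (l-1)
  rw [show k+l-2+1 = k+l-1 by omega, show l-1+1 = l by omega] at this
  rw [← this]
  apply Finset.sum_nbij' (fun i => k+l-1-i) (fun j => k+l-1-j)
  · intro x hx; simp only [Finset.mem_Icc] at hx ⊢; omega
  · intro x hx; simp only [Finset.mem_Icc] at hx ⊢; omega
  · intro x hx; simp only [Finset.mem_Icc] at hx; omega
  · intro x hx; simp only [Finset.mem_Icc] at hx; omega
  · intro x hx; simp only [Finset.mem_Icc] at hx
    congr 1
    omega

theorem finite_double_shuffle (t : ℝ) (k l : ℕ) (hk : 2 ≤ k) (hl : 2 ≤ l) :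
    (1 + ((Nat.choose (k + l) k : ℝ) - 2) * t) * zetaVal (k + l) =
      ∑ i ∈ Finset.Icc 1 (k - 1),
          (Nat.choose (k + l - i - 1) (l - 1) : ℝ) * tDoubleZeta t (k + l - i) i +
        ∑ i ∈ Finset.Icc 1 (l - 1),
          (Nat.choose (k + l - i - 1) (k - 1) : ℝ) * tDoubleZeta t (k + l - i) i := by
  -- peel top terms off euler's sums
  have peel1 : ∑ i ∈ Finset.Icc 1 k, (Nat.choose (k+l-i-1) (l-1) : ℝ) * doubleZeta (k+l-i) i
      = (∑ i ∈ Finset.Icc 1 (k-1), (Nat.choose (k+l-i-1) (l-1) : ℝ) * doubleZeta (k+l-i) i)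
        + doubleZeta l k := by
    rw [show k = (k-1)+1 by omega, Finset.sum_Icc_succ_top (by omega)]
    rw [show k-1+1 = k by omega]
    congr 1
    rw [show k+l-k-1 = l-1 by omega, show k+l-k = l by omega, Nat.choose_self]
    simp
  have peel2 : ∑ i ∈ Finset.Icc 1 l, (Nat.choose (k+l-i-1) (k-1) : ℝ) * doubleZeta (k+l-i) i
      = (∑ i ∈ Finset.Icc 1 (l-1), (Nat.choose (k+l-i-1) (k-1) : ℝ) * doubleZeta (k+l-i) i)
        + doubleZeta k l := by
    rw [show l = (l-1)+1 by omega, Finset.sum_Icc_succ_top (by omega)]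
    rw [show l-1+1 = l by omega]
    congr 1
    rw [show k+l-l-1 = k-1 by omega, show k+l-l = k by omega, Nat.choose_self]
    simp
  have key : zetaVal (k+l)
      = (∑ i ∈ Finset.Icc 1 (k-1), (Nat.choose (k+l-i-1) (l-1) : ℝ) * doubleZeta (k+l-i) i)
        + (∑ i ∈ Finset.Icc 1 (l-1), (Nat.choose (k+l-i-1) (k-1) : ℝ) * doubleZeta (k+l-i) i) := by
    have h := stuffle hk hl
    rw [euler hk hl, peel1, peel2] at h
    linarith
  -- binomial coefficient sum
  have hbin : (∑ i ∈ Finset.Icc 1 (k-1), (Nat.choose (k+l-i-1) (l-1) : ℝ))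
      + (∑ i ∈ Finset.Icc 1 (l-1), (Nat.choose (k+l-i-1) (k-1) : ℝ))
      = (Nat.choose (k+l) k : ℝ) - 2 := by
    have h1 : ∑ i ∈ Finset.Icc 1 k, Nat.choose (k+l-i-1) (l-1) = Nat.choose (k+l-1) l :=
      hockey k l (by omega) (by omega)
    have h2 : ∑ i ∈ Finset.Icc 1 l, Nat.choose (k+l-i-1) (k-1) = Nat.choose (k+l-1) k := by
      have := hockey l k (by omega) (by omega)
      rw [Nat.add_comm l k] at this
      exact this
    have p1 : ∑ i ∈ Finset.Icc 1 (k-1), Nat.choose (k+l-i-1) (l-1)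
        = Nat.choose (k+l-1) l - 1 := by
      rw [← h1, show k = (k-1)+1 by omega, Finset.sum_Icc_succ_top (by omega)]
      rw [show k-1+1 = k by omega, show k+l-k-1 = l-1 by omega, Nat.choose_self]
      omega
    have p2 : ∑ i ∈ Finset.Icc 1 (l-1), Nat.choose (k+l-i-1) (k-1)
        = Nat.choose (k+l-1) k - 1 := by
      rw [← h2, show l = (l-1)+1 by omega, Finset.sum_Icc_succ_top (by omega)]
      rw [show l-1+1 = l by omega, show k+l-l-1 = k-1 by omega, Nat.choose_self]
      omega
    have pascal : Nat.choose (k+l-1) l + Nat.choose (k+l-1) k = Nat.choose (k+l) k := by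
      have hsym : Nat.choose (k+l-1) l = Nat.choose (k+l-1) (k-1) := by
        rw [← Nat.choose_symm (show l ≤ k+l-1 by omega)]
        congr 1
        omega
      have hp := Nat.choose_succ_succ (k+l-1) (k-1)
      simp only [Nat.succ_eq_add_one] at hp
      rw [show k-1+1 = k by omega, show k+l-1+1 = k+l by omega] at hp
      rw [hsym, hp]
    have hg1 : 1 ≤ Nat.choose (k+l-1) l := Nat.choose_pos (by omega)
    have hg2 : 1 ≤ Nat.choose (k+l-1) k := Nat.choose_pos (by omega)
    have q1 : (∑ i ∈ Finset.Icc 1 (k-1), (Nat.choose (k+l-i-1) (l-1) : ℝ))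
        = (Nat.choose (k+l-1) l : ℝ) - 1 := by
      rw [← Nat.cast_sum, p1, Nat.cast_sub hg1, Nat.cast_one]
    have q2 : (∑ i ∈ Finset.Icc 1 (l-1), (Nat.choose (k+l-i-1) (k-1) : ℝ))
        = (Nat.choose (k+l-1) k : ℝ) - 1 := by
      rw [← Nat.cast_sum, p2, Nat.cast_sub hg2, Nat.cast_one]
    rw [q1, q2, ← pascal]
    push_cast
    ring
  -- assemble
  simp only [tDoubleZeta]
  have expand : ∀ (s : Finset ℕ) (c d : ℕ → ℝ),
      ∑ i ∈ s, c i * (d i + t * zetaVal (k+l))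
        = (∑ i ∈ s, c i * d i) + (∑ i ∈ s, c i) * (t * zetaVal (k+l)) := by
    intro s c d
    rw [Finset.sum_mul]
    rw [← Finset.sum_add_distrib]
    apply Finset.sum_congr rfl
    intro i hi
    ring
  have fix1 : ∑ i ∈ Finset.Icc 1 (k-1), (Nat.choose (k+l-i-1) (l-1) : ℝ)
        * (doubleZeta (k+l-i) i + t * zetaVal (k+l-i+i))
      = ∑ i ∈ Finset.Icc 1 (k-1), (Nat.choose (k+l-i-1) (l-1) : ℝ)
        * (doubleZeta (k+l-i) i + t * zetaVal (k+l)) :=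
    Finset.sum_congr rfl (fun i hi => by
      rw [show k+l-i+i = k+l from by simp only [Finset.mem_Icc] at hi; omega])
  have fix2 : ∑ i ∈ Finset.Icc 1 (l-1), (Nat.choose (k+l-i-1) (k-1) : ℝ)
        * (doubleZeta (k+l-i) i + t * zetaVal (k+l-i+i))
      = ∑ i ∈ Finset.Icc 1 (l-1), (Nat.choose (k+l-i-1) (k-1) : ℝ)
        * (doubleZeta (k+l-i) i + t * zetaVal (k+l)) :=
    Finset.sum_congr rfl (fun i hi => by
      rw [show k+l-i+i = k+l from by simp only [Finset.mem_Icc] at hi; omega])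
  rw [fix1, fix2, expand, expand]
  rw [show ((1:ℝ) + ((Nat.choose (k+l) k : ℝ) - 2) * t) * zetaVal (k+l)
      = zetaVal (k+l) + ((Nat.choose (k+l) k : ℝ) - 2) * (t * zetaVal (k+l)) by ring]
  rw [key, ← hbin]
  ring
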